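/- For positive semi-definite operators M and N, and any density operator ρ, F(M, ρ) + F(N, ρ) ≤ √(Tr M + Tr N + 2 F(M, N)). -/

import Mathlib

open ComplexOrder

/-- The positive semidefinite square root of a positive semidefinite matrix
(`Matrix.PosSemidef.sqrt`, removed from Mathlib; restored with its old definition). -/
noncomputable def Matrix.PosSemidef.sqrt {n 𝕜 : Type*} [Fintype n] [RCLike 𝕜] [DecidableEq n]
    {A : Matrix n n 𝕜} (hA : A.PosSemidef) : Matrix n n 𝕜 :=
  (hA.1.eigenvectorUnitary : Matrix n n 𝕜) *
    Matrix.diagonal (fun i => ((√(hA.1.eigenvalues i) : ℝ) : 𝕜)) *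
    (star hA.1.eigenvectorUnitary : Matrix n n 𝕜)

/-- Trace norm ‖A‖₁ = Tr √(AᴴA). -/
noncomputable def traceNorm {n : Type*} [Fintype n] [DecidableEq n]
    (A : Matrix n n ℂ) : ℝ :=
  ((Matrix.posSemidef_conjTranspose_mul_self A).sqrt.trace).re

section Helpers

set_option linter.unusedSectionVars false
set_option maxHeartbeats 1000000

open Matrix

variable {n : Type*} [Fintype n] [DecidableEq n]

lemma Matrix.PosSemidef.posSemidef_sqrt {A : Matrix n n ℂ} (hA : A.PosSemidef) :
    hA.sqrt.PosSemidef := by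
  unfold Matrix.PosSemidef.sqrt
  have hD : (diagonal (fun i => ((√(hA.1.eigenvalues i) : ℝ) : ℂ))).PosSemidef :=
    Matrix.posSemidef_diagonal_iff.mpr fun i => Complex.zero_le_real.mpr (Real.sqrt_nonneg _)
  exact hD.mul_mul_conjTranspose_same _

lemma Matrix.PosSemidef.sqrt_mul_self {A : Matrix n n ℂ} (hA : A.PosSemidef) :
    hA.sqrt * hA.sqrt = A := by
  unfold Matrix.PosSemidef.sqrt
  have hU : (star hA.1.eigenvectorUnitary : Matrix n n ℂ) * hA.1.eigenvectorUnitary = 1 :=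
    Unitary.coe_star_mul_self _
  have hD : diagonal (fun i => ((√(hA.1.eigenvalues i) : ℝ) : ℂ)) *
      diagonal (fun i => ((√(hA.1.eigenvalues i) : ℝ) : ℂ))
      = diagonal (RCLike.ofReal ∘ hA.1.eigenvalues) := by
    rw [diagonal_mul_diagonal]; congr 1; funext i
    simp only [Function.comp_apply, ← Complex.ofReal_mul,
      Real.mul_self_sqrt (hA.eigenvalues_nonneg i)]
    rfl
  conv_rhs => rw [hA.1.spectral_theorem]
  rw [Unitary.conjStarAlgAut_apply, ← hD]
  simp only [mul_assoc]
  rw [← mul_assoc (star hA.1.eigenvectorUnitary : Matrix n n ℂ) _ _, hU, one_mul]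
  rfl


lemma trace_re_nonneg' {A : Matrix n n ℂ} (hA : A.PosSemidef) : 0 ≤ A.trace.re := by
  simp only [Matrix.trace, Matrix.diag, Complex.re_sum]
  refine Finset.sum_nonneg fun i _ => ?_
  have h := hA.dotProduct_mulVec_nonneg (Pi.single i 1)
  have heq : dotProduct (star (Pi.single i 1)) (A *ᵥ Pi.single i 1) = A i i := by
    simp [dotProduct, mulVec, Pi.single_apply]
  rw [heq] at h
  exact (Complex.le_def.mp h).1

lemma trace_sq_sum (X : Matrix n n ℂ) :
    (Xᴴ * X).trace.re = ∑ p : n × n, ‖X p.2 p.1‖ ^ 2 := by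
  rw [Fintype.sum_prod_type]
  simp only [Matrix.trace, Matrix.diag, Complex.re_sum, Matrix.mul_apply,
    Matrix.conjTranspose_apply]
  refine Finset.sum_congr rfl fun i _ => ?_
  refine Finset.sum_congr rfl fun j _ => ?_
  rw [Complex.star_def, ← Complex.normSq_eq_conj_mul_self, Complex.sq_norm]
  simp

lemma trace_cs (X Y : Matrix n n ℂ) :
    ‖(Xᴴ * Y).trace‖ ≤
      Real.sqrt ((Xᴴ * X).trace.re) * Real.sqrt ((Yᴴ * Y).trace.re) := by
  have habs : ‖(Xᴴ * Y).trace‖ ≤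
      ∑ p : n × n, ‖X p.2 p.1‖ * ‖Y p.2 p.1‖ := by
    rw [Fintype.sum_prod_type]
    simp only [Matrix.trace, Matrix.diag]
    calc ‖∑ i, (Xᴴ * Y) i i‖ ≤ ∑ i, ‖(Xᴴ * Y) i i‖ :=
          norm_sum_le _ _
      _ ≤ ∑ i : n, ∑ j : n, ‖X j i‖ * ‖Y j i‖ := by
          refine Finset.sum_le_sum fun i _ => ?_
          rw [Matrix.mul_apply]
          refine (norm_sum_le _ _).trans ?_
          refine Finset.sum_le_sum fun j _ => ?_
          rw [Matrix.conjTranspose_apply]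
          simp [norm_mul]
  have hcs := Finset.sum_mul_sq_le_sq_mul_sq Finset.univ
      (fun p : n × n => ‖X p.2 p.1‖) (fun p => ‖Y p.2 p.1‖)
  rw [← trace_sq_sum X, ← trace_sq_sum Y] at hcs
  refine habs.trans ?_
  have hnn : (0:ℝ) ≤ ∑ p : n × n, ‖X p.2 p.1‖ * ‖Y p.2 p.1‖ :=
    Finset.sum_nonneg fun p _ => mul_nonneg (norm_nonneg _) (norm_nonneg _)
  calc (∑ p : n × n, ‖X p.2 p.1‖ * ‖Y p.2 p.1‖)
      = Real.sqrt ((∑ p : n × n, ‖X p.2 p.1‖ * ‖Y p.2 p.1‖) ^ 2) :=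
        (Real.sqrt_sq hnn).symm
    _ ≤ Real.sqrt ((Xᴴ * X).trace.re * (Yᴴ * Y).trace.re) := Real.sqrt_le_sqrt hcs
    _ = _ := Real.sqrt_mul (by rw [trace_sq_sum]; positivity) _

lemma polar_decomp (B : Matrix n n ℂ) :
    ∃ W : Matrix n n ℂ, (1 - Wᴴ * W).PosSemidef ∧ (1 - W * Wᴴ).PosSemidef ∧
      W * (Matrix.posSemidef_conjTranspose_mul_self B).sqrt = B ∧
      Wᴴ * B = (Matrix.posSemidef_conjTranspose_mul_self B).sqrt := by
  have h := Matrix.posSemidef_conjTranspose_mul_self B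
  set d : n → ℝ := h.1.eigenvalues with hd_def
  have hd : ∀ i, 0 ≤ d i := h.eigenvalues_nonneg
  set Vm : Matrix n n ℂ := (h.1.eigenvectorUnitary : Matrix n n ℂ) with hV_def
  have hV1 : Vmᴴ * Vm = 1 := by
    simpa [Matrix.star_eq_conjTranspose] using
      (Matrix.mem_unitaryGroup_iff').mp h.1.eigenvectorUnitary.2
  have hV2 : Vm * Vmᴴ = 1 := by
    simpa [Matrix.star_eq_conjTranspose] using
      (Matrix.mem_unitaryGroup_iff).mp h.1.eigenvectorUnitary.2
  set s : n → ℂ := fun i => (Real.sqrt (d i) : ℂ) with hs_def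
  set e : n → ℂ := fun i => if d i = 0 then 0 else ((Real.sqrt (d i))⁻¹ : ℂ) with he_def
  set q : n → ℂ := fun i => if d i = 0 then 0 else 1 with hq_def
  -- scalar identities
  have hsne : ∀ i, d i ≠ 0 → (Real.sqrt (d i) : ℂ) ≠ 0 := by
    intro i hi
    simp only [ne_eq, Complex.ofReal_eq_zero]
    exact Real.sqrt_ne_zero'.mpr (lt_of_le_of_ne (hd i) (Ne.symm hi))
  have hss : ∀ i, s i * s i = (d i : ℂ) := by
    intro i
    simp only [hs_def, ← Complex.ofReal_mul, Real.mul_self_sqrt (hd i)]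
  have hes : ∀ i, e i * s i = q i := by
    intro i
    by_cases hi : d i = 0 <;> simp [he_def, hq_def, hs_def, hi]
    exact inv_mul_cancel₀ (hsne i hi)
  have hqs : ∀ i, q i * s i = s i := by
    intro i
    by_cases hi : d i = 0 <;> simp [hq_def, hs_def, hi]
  have hed : ∀ i, e i * (d i : ℂ) = s i := by
    intro i
    rw [← hss i, ← mul_assoc, hes, hqs]

  have heq : ∀ i, e i * q i = e i := by
    intro i; by_cases hi : d i = 0 <;> simp [he_def, hq_def, hi]
  have hede : ∀ i, e i * (d i : ℂ) * e i = q i := by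
    intro i
    rw [hed, mul_comm, hes]
  -- spectral theorem
  have hdd : (RCLike.ofReal ∘ d : n → ℂ) = fun i => (d i : ℂ) := rfl
  have hspec : Vmᴴ * ((Bᴴ * B) * Vm) = diagonal (fun i => (d i : ℂ)) := by
    have hsp := h.1.conjStarAlgAut_star_eigenvectorUnitary
    rw [Unitary.conjStarAlgAut_star_apply] at hsp
    rw [Matrix.star_eq_conjTranspose, mul_assoc, hdd] at hsp
    exact hsp
  set C : Matrix n n ℂ := B * Vm with hC_def
  have hC : Cᴴ * C = diagonal (fun i => (d i : ℂ)) := by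
    rw [hC_def]
    calc (B * Vm)ᴴ * (B * Vm) = Vmᴴ * ((Bᴴ * B) * Vm) := by
          simp only [conjTranspose_mul, mul_assoc]
      _ = _ := hspec
  have hcol : ∀ i, d i = 0 → ∀ a, C a i = 0 := by
    intro i hi a
    have h0 : (Cᴴ * C) i i = 0 := by rw [hC]; simp [hi]
    rw [Matrix.mul_apply] at h0
    have h1 : ∑ j, (Complex.normSq (C j i) : ℂ) = 0 := by
      rw [← h0]
      refine Finset.sum_congr rfl fun j _ => ?_
      rw [Matrix.conjTranspose_apply, Complex.star_def, Complex.normSq_eq_conj_mul_self]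
    have h2 : ∑ j, Complex.normSq (C j i) = 0 := by exact_mod_cast h1
    have h3 := (Finset.sum_eq_zero_iff_of_nonneg
      (fun j _ => Complex.normSq_nonneg (C j i))).mp h2 a (Finset.mem_univ a)
    exact Complex.normSq_eq_zero.mp h3
  -- assoc helpers
  have hVV : ∀ X : Matrix n n ℂ, Vmᴴ * (Vm * X) = X := fun X => by
    rw [← mul_assoc, hV1, one_mul]
  have hDD : ∀ (f g : n → ℂ) (X : Matrix n n ℂ),
      diagonal f * (diagonal g * X) = diagonal (fun i => f i * g i) * X := fun f g X => by
    rw [← mul_assoc, diagonal_mul_diagonal]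
  have hCC : ∀ X : Matrix n n ℂ, Cᴴ * (C * X) = diagonal (fun i => (d i : ℂ)) * X := fun X => by
    rw [← mul_assoc, hC]
  set W : Matrix n n ℂ := C * (diagonal e * Vmᴴ) with hW_def
  have hse : (star e : n → ℂ) = e := by
    funext i
    by_cases hi : d i = 0 <;>
      simp [he_def, hi, Pi.star_apply, Complex.star_def, Complex.conj_ofReal]
  have heH : (diagonal e)ᴴ = diagonal e := by
    rw [diagonal_conjTranspose, hse]
  have hWH : Wᴴ = Vm * (diagonal e * Cᴴ) := by
    rw [hW_def]
    simp only [conjTranspose_mul, heH, conjTranspose_conjTranspose, mul_assoc]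
  have hCV : C * Vmᴴ = B := by rw [hC_def, mul_assoc, hV2, mul_one]
  have hCB : Cᴴ * B = diagonal (fun i => (d i:ℂ)) * Vmᴴ := by rw [← hCV, hCC]
  have hWB : Wᴴ * B = Vm * (diagonal s * Vmᴴ) := by
    rw [hWH]
    simp only [mul_assoc]
    rw [hCB, hDD]
    have hfun : (fun i => e i * (d i : ℂ)) = s := funext hed
    rw [hfun]
  have hCq : C * diagonal q = C := by
    ext a i
    rw [Matrix.mul_diagonal]
    by_cases hi : d i = 0
    · simp [hq_def, hi, hcol i hi a]
    · simp [hq_def, hi]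
  have hWW : Wᴴ * W = Vm * (diagonal q * Vmᴴ) := by
    rw [hWH, hW_def]
    simp only [mul_assoc]
    rw [hCC, hDD, hDD]
    have hfun : (fun i => e i * (d i : ℂ) * e i) = q := funext hede
    rw [hfun]
  have hWq : W * (Vm * (diagonal q * Vmᴴ)) = W := by
    rw [hW_def]
    simp only [mul_assoc]
    rw [hVV, hDD]
    have hfun : (fun i => e i * q i) = e := funext heq
    rw [hfun]
  have hWP : W * (Vm * (diagonal s * Vmᴴ)) = B := by
    rw [hW_def]
    simp only [mul_assoc]
    rw [hVV, hDD]
    have : (fun i => e i * s i) = q := funext hes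
    rw [this, ← mul_assoc, hCq, hCV]
  have hPsqrt : (Matrix.posSemidef_conjTranspose_mul_self B).sqrt
      = Vm * (diagonal s * Vmᴴ) := by
    unfold Matrix.PosSemidef.sqrt
    rw [mul_assoc]
    rfl
  -- PSD facts
  have hconj : ∀ f : n → ℂ, (∀ i, 0 ≤ f i) → (Vm * (diagonal f * Vmᴴ)).PosSemidef := by
    intro f hf
    have := (Matrix.posSemidef_diagonal_iff.mpr hf).mul_mul_conjTranspose_same Vm
    rw [mul_assoc] at this
    exact this
  have h1q : (1 : Matrix n n ℂ) - Vm * (diagonal q * Vmᴴ)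
      = Vm * (diagonal (fun i => 1 - q i) * Vmᴴ) := by
    have hdq : (diagonal (fun i => 1 - q i) : Matrix n n ℂ) = 1 - diagonal q := by
      ext i j
      by_cases hij : i = j <;>
        simp [hij, Matrix.sub_apply, Matrix.one_apply, Matrix.diagonal_apply]
    rw [hdq, sub_mul, one_mul, mul_sub, hV2]
  have hWWpsd : (1 - Wᴴ * W).PosSemidef := by
    rw [hWW, h1q]
    refine hconj _ fun i => ?_
    by_cases hi : d i = 0 <;> simp [hq_def, hi]
  have hSH : (W * Wᴴ)ᴴ = W * Wᴴ := by
    rw [conjTranspose_mul, conjTranspose_conjTranspose]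
  have hSS : (W * Wᴴ) * (W * Wᴴ) = W * Wᴴ := by
    calc (W * Wᴴ) * (W * Wᴴ) = W * ((Wᴴ * W) * Wᴴ) := by
          simp only [mul_assoc]
      _ = (W * (Vm * (diagonal q * Vmᴴ))) * Wᴴ := by rw [hWW, ← mul_assoc]
      _ = W * Wᴴ := by rw [hWq]
  have hproj : (1 : Matrix n n ℂ) - W * Wᴴ
      = ((1 : Matrix n n ℂ) - W * Wᴴ)ᴴ * (1 - W * Wᴴ) := by
    rw [conjTranspose_sub, conjTranspose_one, hSH, sub_mul, one_mul, mul_sub, mul_one, hSS]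
    abel
  refine ⟨W, hWWpsd, ?_, ?_, ?_⟩
  · rw [hproj]; exact Matrix.posSemidef_conjTranspose_mul_self _
  · rw [hPsqrt]; exact hWP
  · rw [hPsqrt]; exact hWB

lemma contr_trace_le {C K : Matrix n n ℂ} (hC : C.PosSemidef)
    (hK : (1 - Kᴴ * K).PosSemidef) : (K * C * Kᴴ).trace.re ≤ C.trace.re := by
  set S := hC.sqrt with hSdef
  have hS : S * S = C := hC.sqrt_mul_self
  have hSH : Sᴴ = S := hC.posSemidef_sqrt.1
  have h2 : (K * C * Kᴴ).trace = (S * (Kᴴ * K * S)).trace := by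
    calc (K * C * Kᴴ).trace = (Kᴴ * (K * C)).trace := Matrix.trace_mul_comm _ _
      _ = ((Kᴴ * K * S) * S).trace := by rw [← hS]; simp only [Matrix.mul_assoc]
      _ = (S * (Kᴴ * K * S)).trace := (Matrix.trace_mul_comm _ _).symm
  have h3 : C.trace - (K * C * Kᴴ).trace = (Sᴴ * ((1 - Kᴴ * K) * S)).trace := by
    rw [hSH, sub_mul, one_mul, mul_sub, Matrix.trace_sub, h2, hS]
  have h4 : (Sᴴ * ((1 - Kᴴ * K) * S)).PosSemidef := by
    have := hK.conjTranspose_mul_mul_same S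
    rw [Matrix.mul_assoc] at this
    exact this
  have h5 := trace_re_nonneg' h4
  rw [← h3, Complex.sub_re] at h5
  linarith

lemma trace_contraction_le (B K : Matrix n n ℂ) (hK : (1 - Kᴴ * K).PosSemidef) :
    (K * B).trace.re ≤ traceNorm B := by
  obtain ⟨W, hW1, hW2, hWP, hWB⟩ := polar_decomp B
  set P := (Matrix.posSemidef_conjTranspose_mul_self B).sqrt with hPdef
  have hPpsd : P.PosSemidef := (Matrix.posSemidef_conjTranspose_mul_self B).posSemidef_sqrt
  set R := hPpsd.sqrt with hRdef
  have hRR : R * R = P := hPpsd.sqrt_mul_self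
  have hRH : Rᴴ = R := hPpsd.posSemidef_sqrt.1
  have hWWP : Wᴴ * (W * P) = P := by rw [hWP, hWB]
  have h1 : K * B = (K * (W * R)) * R := by
    rw [← hWP, ← hRR]
    simp only [Matrix.mul_assoc]
  have hcs := trace_cs ((K * (W * R))ᴴ) R
  rw [conjTranspose_conjTranspose] at hcs
  have hZZ : (K * (W * R)) * (K * (W * R))ᴴ = K * (W * P * Wᴴ) * Kᴴ := by
    rw [conjTranspose_mul, conjTranspose_mul, hRH, ← hRR]
    simp only [Matrix.mul_assoc]
  have hC0 : (W * P * Wᴴ).PosSemidef := hPpsd.mul_mul_conjTranspose_same W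
  have hC0tr : (W * P * Wᴴ).trace = P.trace := by
    calc (W * P * Wᴴ).trace = (Wᴴ * (W * P)).trace := Matrix.trace_mul_comm _ _
      _ = P.trace := by rw [hWWP]
  have hcontr : (K * (W * P * Wᴴ) * Kᴴ).trace.re ≤ P.trace.re := by
    have := contr_trace_le hC0 hK
    rwa [hC0tr] at this
  have hRtr : (Rᴴ * R).trace = P.trace := by rw [hRH, hRR]
  have hPtr : 0 ≤ P.trace.re := trace_re_nonneg' hPpsd
  have htn : traceNorm B = P.trace.re := rfl
  calc (K * B).trace.re ≤ ‖(K * B).trace‖ := Complex.re_le_norm _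
    _ = ‖((K * (W * R)) * R).trace‖ := by rw [h1]
    _ ≤ Real.sqrt (((K * (W * R)) * (K * (W * R))ᴴ).trace.re)
        * Real.sqrt ((Rᴴ * R).trace.re) := hcs
    _ ≤ Real.sqrt (P.trace.re) * Real.sqrt (P.trace.re) := by
        rw [hZZ, hRtr]
        exact mul_le_mul_of_nonneg_right (Real.sqrt_le_sqrt hcontr) (Real.sqrt_nonneg _)
    _ = P.trace.re := Real.mul_self_sqrt hPtr
    _ = traceNorm B := htn.symm

lemma contr_comp {K₁ K₂ : Matrix n n ℂ} (h1 : (1 - K₁ᴴ * K₁).PosSemidef)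
    (h2 : (1 - K₂ * K₂ᴴ).PosSemidef) :
    (1 - (K₂ᴴ * K₁)ᴴ * (K₂ᴴ * K₁)).PosSemidef := by
  have hid : (1 : Matrix n n ℂ) - (K₂ᴴ * K₁)ᴴ * (K₂ᴴ * K₁)
      = (1 - K₁ᴴ * K₁) + K₁ᴴ * (1 - K₂ * K₂ᴴ) * K₁ := by
    rw [conjTranspose_mul, conjTranspose_conjTranspose]
    noncomm_ring
  rw [hid]
  exact h1.add (h2.conjTranspose_mul_mul_same K₁)


end Helpers

set_option maxHeartbeats 1000000 in
open Matrix in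
/-- For PSD M, N and any density operator ρ:
F(M,ρ) + F(N,ρ) ≤ √(Tr M + Tr N + 2 F(M,N)). -/
theorem fidelity_sum_le
    {n : Type*} [Fintype n] [DecidableEq n]
    (M N ρ : Matrix n n ℂ) (hM : M.PosSemidef) (hN : N.PosSemidef)
    (hρ : ρ.PosSemidef) (hρtr : ρ.trace = 1) :
    traceNorm (hM.sqrt * hρ.sqrt) + traceNorm (hN.sqrt * hρ.sqrt)
      ≤ Real.sqrt (M.trace.re + N.trace.re + 2 * traceNorm (hM.sqrt * hN.sqrt)) := by
  obtain ⟨W₁, hW1a, hW1b, hW1P, hW1B⟩ := polar_decomp (hM.sqrt * hρ.sqrt)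
  obtain ⟨W₂, hW2a, hW2b, hW2P, hW2B⟩ := polar_decomp (hN.sqrt * hρ.sqrt)
  set SM := hM.sqrt with hSM
  set SN := hN.sqrt with hSN
  set Sρ := hρ.sqrt with hSρ
  have hSMH : SMᴴ = SM := hM.posSemidef_sqrt.1
  have hSNH : SNᴴ = SN := hN.posSemidef_sqrt.1
  have hSρH : Sρᴴ = Sρ := hρ.posSemidef_sqrt.1
  set K₁ := W₁ᴴ with hK₁def
  set K₂ := W₂ᴴ with hK₂def
  have hK₁c : (1 - K₁ᴴ * K₁).PosSemidef := by
    rw [hK₁def, conjTranspose_conjTranspose]; exact hW1b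
  have hK₂c : (1 - K₂ᴴ * K₂).PosSemidef := by
    rw [hK₂def, conjTranspose_conjTranspose]; exact hW2b
  have hK₂c' : (1 - K₂ * K₂ᴴ).PosSemidef := by
    rw [hK₂def, conjTranspose_conjTranspose]; exact hW2a
  have ht1 : (K₁ * (SM * Sρ)).trace.re = traceNorm (SM * Sρ) := by
    rw [hK₁def, hW1B]; rfl
  have ht2 : (K₂ * (SN * Sρ)).trace.re = traceNorm (SN * Sρ) := by
    rw [hK₂def, hW2B]; rfl
  set A := K₁ * SM + K₂ * SN with hA
  have hsum : K₁ * (SM * Sρ) + K₂ * (SN * Sρ) = A * Sρ := by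
    rw [hA, add_mul]; simp only [Matrix.mul_assoc]
  have hcs := trace_cs Aᴴ Sρ
  rw [conjTranspose_conjTranspose] at hcs
  have hrho : (Sρᴴ * Sρ).trace.re = 1 := by
    rw [hSρH, hρ.sqrt_mul_self, hρtr, Complex.one_re]
  -- expansion
  have hAH : Aᴴ = SM * K₁ᴴ + SN * K₂ᴴ := by
    rw [hA, conjTranspose_add, conjTranspose_mul, conjTranspose_mul, hSMH, hSNH]
  have hprod : A * Aᴴ = (K₁ * SM) * (SM * K₁ᴴ) + (K₁ * SM) * (SN * K₂ᴴ)
      + ((K₂ * SN) * (SM * K₁ᴴ) + (K₂ * SN) * (SN * K₂ᴴ)) := by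
    rw [hA, hAH, add_mul, mul_add, mul_add, add_add_add_comm]
  have hT11 : (K₁ * SM) * (SM * K₁ᴴ) = K₁ * M * K₁ᴴ := by
    rw [show M = SM * SM from hM.sqrt_mul_self.symm]
    simp only [Matrix.mul_assoc]
  have hT22 : (K₂ * SN) * (SN * K₂ᴴ) = K₂ * N * K₂ᴴ := by
    rw [show N = SN * SN from hN.sqrt_mul_self.symm]
    simp only [Matrix.mul_assoc]
  have hT12tr : ((K₁ * SM) * (SN * K₂ᴴ)).trace = ((K₂ᴴ * K₁) * (SM * SN)).trace := by
    calc ((K₁ * SM) * (SN * K₂ᴴ)).trace = ((K₁ * (SM * SN)) * K₂ᴴ).trace := by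
          simp only [Matrix.mul_assoc]
      _ = (K₂ᴴ * (K₁ * (SM * SN))).trace := Matrix.trace_mul_comm _ _
      _ = ((K₂ᴴ * K₁) * (SM * SN)).trace := by simp only [Matrix.mul_assoc]
  have hT21 : (K₂ * SN) * (SM * K₁ᴴ) = ((K₁ * SM) * (SN * K₂ᴴ))ᴴ := by
    simp only [conjTranspose_mul, conjTranspose_conjTranspose, hSMH, hSNH]
  have hcross : (K₂ᴴ * K₁ * (SM * SN)).trace.re ≤ traceNorm (SM * SN) :=
    trace_contraction_le _ _ (contr_comp hK₁c hK₂c')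
  have hd1 : (K₁ * M * K₁ᴴ).trace.re ≤ M.trace.re := contr_trace_le hM hK₁c
  have hd2 : (K₂ * N * K₂ᴴ).trace.re ≤ N.trace.re := contr_trace_le hN hK₂c
  have hAAH : (A * Aᴴ).trace.re
      ≤ M.trace.re + N.trace.re + 2 * traceNorm (SM * SN) := by
    rw [hprod, Matrix.trace_add, Matrix.trace_add, Matrix.trace_add, hT11, hT22]
    rw [Complex.add_re, Complex.add_re, Complex.add_re]
    have h21 : ((K₂ * SN) * (SM * K₁ᴴ)).trace.re = ((K₁ * SM) * (SN * K₂ᴴ)).trace.re := by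
      rw [hT21, Matrix.trace_conjTranspose]
      exact Complex.conj_re _
    rw [h21]
    have h12 : ((K₁ * SM) * (SN * K₂ᴴ)).trace.re ≤ traceNorm (SM * SN) := by
      rw [hT12tr]; exact hcross
    linarith
  have hstep : traceNorm (SM * Sρ) + traceNorm (SN * Sρ) ≤ Real.sqrt ((A * Aᴴ).trace.re) := by
    calc traceNorm (SM * Sρ) + traceNorm (SN * Sρ)
        = (K₁ * (SM * Sρ)).trace.re + (K₂ * (SN * Sρ)).trace.re := by rw [ht1, ht2]
      _ = ((K₁ * (SM * Sρ) + K₂ * (SN * Sρ)).trace).re := by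
          rw [Matrix.trace_add, Complex.add_re]
      _ = (A * Sρ).trace.re := by rw [hsum]
      _ ≤ ‖(A * Sρ).trace‖ := Complex.re_le_norm _
      _ ≤ Real.sqrt ((A * Aᴴ).trace.re) * Real.sqrt ((Sρᴴ * Sρ).trace.re) := hcs
      _ = Real.sqrt ((A * Aᴴ).trace.re) := by rw [hrho, Real.sqrt_one, mul_one]
  exact hstep.trans (Real.sqrt_le_sqrt hAAH)
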